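/- Let n = 2m+1 with m ≥ 1 and let p_n be the polynomial of the ballistic annihilation recursion (p_1 = (1−p)/2; p_n = (p+1/2) Σ_{k1+k2=n−1} p_{k1}p_{k2} − (p/2) Σ_{k1+...+k4=n−1} p_{k1}p_{k2}p_{k3}p_{k4}). Then p_n(0) = (1/2)·C_m·2^{−2m}, where C_m is the m-th Catalan number. -/

import Mathlib

open Finset in
/-- Compositions of `n-1` into 2 positive parts. -/
def comp2 (n : ℕ) : Finset (ℕ × ℕ) :=
  ((range n) ×ˢ (range n)).filter fun q => 1 ≤ q.1 ∧ 1 ≤ q.2 ∧ q.1 + q.2 = n - 1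

open Finset in
/-- Compositions of `n-1` into 3 positive parts. -/
def comp3 (n : ℕ) : Finset (ℕ × ℕ × ℕ) :=
  ((range n) ×ˢ (range n) ×ˢ (range n)).filter fun q =>
    1 ≤ q.1 ∧ 1 ≤ q.2.1 ∧ 1 ≤ q.2.2 ∧ q.1 + q.2.1 + q.2.2 = n - 1

open Finset in
/-- Compositions of `n-1` into 4 positive parts. -/
def comp4 (n : ℕ) : Finset (ℕ × ℕ × ℕ × ℕ) :=
  ((range n) ×ˢ (range n) ×ˢ (range n) ×ˢ (range n)).filter fun q =>
    1 ≤ q.1 ∧ 1 ≤ q.2.1 ∧ 1 ≤ q.2.2.1 ∧ 1 ≤ q.2.2.2 ∧ q.1 + q.2.1 + q.2.2.1 + q.2.2.2 = n - 1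

noncomputable def Qaux : ℕ → ℝ := fun n =>
  if n % 2 = 0 then 0 else 1/2 * (catalan (n/2) : ℝ) / 4 ^ (n / 2)

lemma Qaux_even (j : ℕ) : Qaux (2*j) = 0 := by simp [Qaux, Nat.mul_mod_right]

lemma Qaux_odd (j : ℕ) : Qaux (2*j+1) = 1/2 * (catalan j : ℝ) / 4 ^ j := by
  have h1 : (2*j+1) % 2 = 1 := by omega
  have h2 : (2*j+1) / 2 = j := by omega
  simp [Qaux, h1, h2]

lemma comp2_eq (n : ℕ) :
    comp2 n = (Finset.Ico 1 (n-1)).image (fun i => (i, n-1-i)) := by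
  ext ⟨a, b⟩
  simp only [comp2, Finset.mem_filter, Finset.mem_product, Finset.mem_range,
    Finset.mem_image, Finset.mem_Ico, Prod.mk.injEq]
  constructor
  · rintro ⟨⟨ha, hb⟩, h1, h2, h3⟩
    exact ⟨a, by omega, rfl, by omega⟩
  · rintro ⟨i, hi, rfl, rfl⟩
    omega

lemma sum_comp2 (n : ℕ) (f : ℕ → ℕ → ℝ) :
    ∑ q ∈ comp2 n, f q.1 q.2 = ∑ i ∈ Finset.Ico 1 (n-1), f i (n-1-i) := by
  rw [comp2_eq, Finset.sum_image]
  intro x _ y _ h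
  exact (Prod.mk.injEq ..).mp h |>.1

lemma sum_double (g : ℕ → ℝ) (h : ∀ j, g (2*j) = 0) (m : ℕ) :
    ∑ i ∈ Finset.range (2*m), g i = ∑ j ∈ Finset.range m, g (2*j+1) := by
  induction m with
  | zero => simp
  | succ k ih =>
    have : 2 * (k+1) = (2*k + 1) + 1 := by ring
    rw [this, Finset.sum_range_succ, Finset.sum_range_succ, ih, Finset.sum_range_succ, h k]
    ring

lemma catalan_sum_real (k : ℕ) :
    ∑ j ∈ Finset.range (k+1), (catalan j : ℝ) * (catalan (k - j) : ℝ)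
      = (catalan (k+1) : ℝ) := by
  rw [catalan_succ k]
  push_cast
  rw [Fin.sum_univ_eq_sum_range (fun i => (catalan i : ℝ) * (catalan (k - i) : ℝ)) (k+1)]

lemma main_aux (P : ℕ → ℝ → ℝ)
    (hP1 : ∀ x : ℝ, P 1 x = (1 - x) / 2)
    (hPrec : ∀ n, 2 ≤ n → ∀ x : ℝ,
      P n x = (x + 1/2) * ∑ q ∈ comp2 n, P q.1 x * P q.2 x
              - x/2 * ∑ q ∈ comp4 n, P q.1 x * P q.2.1 x * P q.2.2.1 x * P q.2.2.2 x) :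
    ∀ n, 1 ≤ n → P n 0 = Qaux n := by
  intro n
  induction n using Nat.strong_induction_on with
  | _ n ih =>
    intro hn
    rcases eq_or_lt_of_le hn with h1 | h2
    · rw [← h1, hP1]
      have : Qaux 1 = Qaux (2*0+1) := by norm_num
      rw [this, Qaux_odd]
      simp [catalan_zero]
    · have hn2 : 2 ≤ n := h2
      have hrec := hPrec n hn2 0
      rw [sum_comp2 n (fun a b => P a 0 * P b 0)] at hrec
      have hsum : ∑ i ∈ Finset.Ico 1 (n-1), P i 0 * P (n-1-i) 0
          = ∑ i ∈ Finset.Ico 1 (n-1), Qaux i * Qaux (n-1-i) := by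
        apply Finset.sum_congr rfl
        intro i hi
        rw [Finset.mem_Ico] at hi
        rw [ih i (by omega) hi.1, ih (n-1-i) (by omega) (by omega)]
      rw [hsum] at hrec
      simp only [zero_div, zero_mul, zero_add, sub_zero] at hrec
      -- hrec : P n 0 = 1/2 * ∑ ...
      rcases Nat.even_or_odd n with ⟨t, ht⟩ | ⟨t, ht⟩
      · -- n even: everything vanishes
        have hz : ∑ i ∈ Finset.Ico 1 (n-1), Qaux i * Qaux (n-1-i) = 0 := by
          apply Finset.sum_eq_zero
          intro i hi
          rw [Finset.mem_Ico] at hi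
          rcases Nat.even_or_odd i with ⟨s, hs⟩ | ⟨s, hs⟩
          · rw [hs, show s + s = 2*s by ring, Qaux_even, zero_mul]
          · have : n - 1 - i = 2 * ((n-1-i)/2) := by omega
            rw [this, Qaux_even, mul_zero]
        have hQn : Qaux n = 0 := by
          rw [ht, show t + t = 2*t by ring, Qaux_even]
        rw [hrec, hz, hQn]; ring
      · -- n = 2t+1 odd, t ≥ 1
        have ht1 : 1 ≤ t := by omega
        have hn1 : n - 1 = 2 * t := by omega
        set g : ℕ → ℝ := fun i => Qaux i * Qaux (2*t - i) with hg
        have hIco : ∑ i ∈ Finset.Ico 1 (n-1), Qaux i * Qaux (n-1-i)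
            = ∑ i ∈ Finset.range (2*t), g i := by
          rw [hn1]
          rw [Finset.range_eq_Ico, Finset.sum_eq_sum_Ico_succ_bot (by omega : 0 < 2*t) g]
          have : g 0 = 0 := by
            simp only [hg]
            rw [show (0:ℕ) = 2*0 by ring, Qaux_even, zero_mul]
          rw [this, zero_add]
        have hgeven : ∀ j, g (2*j) = 0 := by
          intro j; simp only [hg]; rw [Qaux_even, zero_mul]
        rw [hIco, sum_double g hgeven t] at hrec
        obtain ⟨k, rfl⟩ : ∃ k, t = k + 1 := ⟨t - 1, by omega⟩
        have hterm : ∀ j ∈ Finset.range (k+1),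
            g (2*j+1) = 1/(4 * 4^k) * ((catalan j : ℝ) * (catalan (k - j) : ℝ)) := by
          intro j hj
          rw [Finset.mem_range] at hj
          simp only [hg]
          have : 2*(k+1) - (2*j+1) = 2*(k-j)+1 := by omega
          rw [this, Qaux_odd, Qaux_odd]
          have h4 : (4:ℝ)^j * 4^(k-j) = 4^k := by
            rw [← pow_add]; congr 1; omega
          rw [← h4]
          field_simp
          ring_nf
        rw [Finset.sum_congr rfl hterm, ← Finset.mul_sum, catalan_sum_real k] at hrec
        rw [hrec, ht, Qaux_odd, pow_succ]
        field_simp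

theorem stmt_14 (P : ℕ → ℝ → ℝ)
    (hP1 : ∀ x : ℝ, P 1 x = (1 - x) / 2)
    (hPrec : ∀ n, 2 ≤ n → ∀ x : ℝ,
      P n x = (x + 1/2) * ∑ q ∈ comp2 n, P q.1 x * P q.2 x
              - x/2 * ∑ q ∈ comp4 n, P q.1 x * P q.2.1 x * P q.2.2.1 x * P q.2.2.2 x)
    (m : ℕ) (hm : 1 ≤ m) :
    P (2*m + 1) 0 = 1/2 * (catalan m : ℝ) * (2:ℝ) ^ (-(2*(m:ℤ))) := by
  rw [main_aux P hP1 hPrec (2*m+1) (by omega), Qaux_odd]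
  have : (2:ℝ) ^ (-(2*(m:ℤ))) = ((4:ℝ)^m)⁻¹ := by
    rw [zpow_neg]
    congr 1
    rw [show 2*(m:ℤ) = ((2*m : ℕ) : ℤ) by push_cast; ring, zpow_natCast, pow_mul]
    norm_num
  rw [this]
  ring
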